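/- arXiv:1909.10110 — 2 statements merged into one kernel-verified Lean document; each statement's English description precedes it below -/
import Mathlib

section
/- Let 0 < ε < 1/4 and K > 0, and let P be a probability measure on R^k with P(‖X‖_p ≤ K) > 1 − ε. Then for every θ in R^k with ‖θ‖_p ≥ 3K, one has M(P,θ) := ∫(‖x−θ‖_p − ‖x‖_p) dP(x) > 0. In particular any minimizer of M(P,·) satisfies ‖θ(P)‖_p ≤ 3K. -/
open MeasureTheory

/-- The ℓ_p norm of a vector in ℝ^k. -/
noncomputable def pnorm {k : ℕ} (p : ℝ) (z : Fin k → ℝ) : ℝ :=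
  (∑ j, |z j| ^ p) ^ (1 / p)

lemma pnorm_nonneg {k : ℕ} (p : ℝ) (z : Fin k → ℝ) : 0 ≤ pnorm p z :=
  Real.rpow_nonneg (Finset.sum_nonneg fun j _ =>
    Real.rpow_nonneg (abs_nonneg _) _) _

lemma pnorm_neg {k : ℕ} (p : ℝ) (z : Fin k → ℝ) : pnorm p (-z) = pnorm p z := by
  simp [pnorm]

lemma pnorm_add_le {k : ℕ} {p : ℝ} (hp : 1 ≤ p) (a b : Fin k → ℝ) :
    pnorm p (a + b) ≤ pnorm p a + pnorm p b := by
  simpa [pnorm] using Real.Lp_add_le Finset.univ a b hp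

lemma pnorm_continuous {k : ℕ} {p : ℝ} (hp : 1 ≤ p) : Continuous (pnorm (k := k) p) := by
  have hp0 : 0 < p := lt_of_lt_of_le one_pos hp
  apply Continuous.rpow_const
  · exact continuous_finset_sum _ fun j _ =>
      (continuous_abs.comp (continuous_apply j)).rpow_const fun x => Or.inr hp0.le
  · exact fun x => Or.inr (by positivity)

lemma pnorm_diff_bound {k : ℕ} {p : ℝ} (hp : 1 ≤ p) (x θ : Fin k → ℝ) :
    |pnorm p (x - θ) - pnorm p x| ≤ pnorm p θ := by
  rw [abs_sub_le_iff]
  constructor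
  · have := pnorm_add_le hp x (-θ)
    rw [pnorm_neg] at this
    simpa [sub_eq_add_neg, add_comm] using this
  · have := pnorm_add_le hp (x - θ) θ
    simpa [add_comm] using this

lemma pnorm_rev_bound {k : ℕ} {p : ℝ} (hp : 1 ≤ p) (x θ : Fin k → ℝ) :
    pnorm p θ - pnorm p x ≤ pnorm p (x - θ) := by
  have := pnorm_add_le hp x (θ - x)
  have h2 : pnorm p (θ - x) = pnorm p (x - θ) := by
    rw [← pnorm_neg p (θ - x)]; ring_nf
  simp at this
  linarith [this, h2.le, h2.ge]

/-- If `0 < ε < 1/4`, `K > 0` and `P(‖X‖_p ≤ K) > 1 − ε`, then every `θ` with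
`‖θ‖_p ≥ 3K` satisfies `M(P,θ) = ∫(‖x−θ‖_p − ‖x‖_p) dP(x) > 0`; in particular any
minimizer of `M(P,·)` satisfies `‖θ(P)‖_p ≤ 3K`. -/
theorem minimizer_bounded {k : ℕ} (p : ℝ) (hp : 1 ≤ p)
    (P : Measure (Fin k → ℝ)) [IsProbabilityMeasure P]
    (ε K : ℝ) (hε0 : 0 < ε) (hε : ε < 1 / 4) (hK : 0 < K)
    (hPK : (P {x | pnorm p x ≤ K}).toReal > 1 - ε) :
    (∀ θ : Fin k → ℝ, 3 * K ≤ pnorm p θ →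
      0 < ∫ x, (pnorm p (x - θ) - pnorm p x) ∂P) ∧
    (∀ θP : Fin k → ℝ,
      (∀ θ : Fin k → ℝ, ∫ x, (pnorm p (x - θP) - pnorm p x) ∂P ≤
        ∫ x, (pnorm p (x - θ) - pnorm p x) ∂P) →
      pnorm p θP ≤ 3 * K) := by
  set A : Set (Fin k → ℝ) := {x | pnorm p x ≤ K} with hA
  have hAmeas : MeasurableSet A :=
    measurableSet_le (pnorm_continuous hp).measurable measurable_const
  have key : ∀ θ : Fin k → ℝ, 3 * K ≤ pnorm p θ →
      0 < ∫ x, (pnorm p (x - θ) - pnorm p x) ∂P := by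
    intro θ hθ
    set T := pnorm p θ with hT
    have hT3 : 3 * K ≤ T := hθ
    have hTpos : 0 < T := lt_of_lt_of_le (by linarith) hT3
    set f : (Fin k → ℝ) → ℝ := fun x => pnorm p (x - θ) - pnorm p x with hf
    have hfcont : Continuous f :=
      ((pnorm_continuous hp).comp (continuous_id.sub continuous_const)).sub
        (pnorm_continuous hp)
    have hfbound : ∀ x, |f x| ≤ T := fun x => pnorm_diff_bound hp x θ
    have hfint : Integrable f P := by
      refine Integrable.mono' (integrable_const T) hfcont.aestronglyMeasurable ?_
      filter_upwards with x
      simpa using hfbound x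
    set g : (Fin k → ℝ) → ℝ :=
      A.indicator (fun _ => T - 2 * K) + Aᶜ.indicator (fun _ => -T) with hg
    have hgint : Integrable g P :=
      ((integrable_const _).indicator hAmeas).add
        ((integrable_const _).indicator hAmeas.compl)
    have hle : ∀ x, g x ≤ f x := by
      intro x
      by_cases hx : x ∈ A
      · have h1 : pnorm p x ≤ K := hx
        have h2 := pnorm_rev_bound hp x θ
        simp only [hg, Pi.add_apply, Set.indicator_of_mem hx,
          Set.indicator_of_notMem (by simpa using hx : x ∉ Aᶜ)]
        simp only [hf]
        linarith
      · have h2 := pnorm_diff_bound hp x θ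
        rw [abs_le] at h2
        simp only [hg, Pi.add_apply, Set.indicator_of_notMem hx,
          Set.indicator_of_mem (Set.mem_compl hx)]
        simp only [hf]
        linarith [h2.1]
    have hint_le : ∫ x, g x ∂P ≤ ∫ x, f x ∂P := integral_mono hgint hfint hle
    have ha1 : (P A).toReal ≤ 1 := by
      simpa using ENNReal.toReal_mono ENNReal.one_ne_top prob_le_one
    have hcompl : (P Aᶜ).toReal = 1 - (P A).toReal := by
      rw [prob_compl_eq_one_sub hAmeas,
        ENNReal.toReal_sub_of_le prob_le_one ENNReal.one_ne_top]
      simp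
    have hgval : ∫ x, g x ∂P = (T - 2 * K) * (P A).toReal + (-T) * (1 - (P A).toReal) := by
      rw [hg]
      simp only [Pi.add_apply]
      rw [integral_add ((integrable_const _).indicator hAmeas)
        ((integrable_const _).indicator hAmeas.compl)]
      rw [integral_indicator_const _ hAmeas, integral_indicator_const _ hAmeas.compl, measureReal_def, measureReal_def, hcompl]
      simp [mul_comm]
    set a := (P A).toReal with ha
    have haε : 1 - ε < a := hPK
    have hgpos : 0 < ∫ x, g x ∂P := by
      rw [hgval]
      have h1 : (T - 2 * K) * a + (-T) * (1 - a) = (2 * T - 2 * K) * a - T := by ring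
      rw [h1]
      have h2 : (2 * T - 2 * K) * (1 - ε) ≤ (2 * T - 2 * K) * a :=
        mul_le_mul_of_nonneg_left haε.le (by linarith)
      nlinarith
    exact lt_of_lt_of_le hgpos hint_le
  refine ⟨key, ?_⟩
  intro θP hmin
  by_contra hcon
  push_neg at hcon
  have h0 : ∫ x, (pnorm p (x - θP) - pnorm p x) ∂P ≤
      ∫ x, (pnorm p (x - (0 : Fin k → ℝ)) - pnorm p x) ∂P := hmin 0
  have hz : ∫ x, (pnorm p (x - (0 : Fin k → ℝ)) - pnorm p x) ∂P = 0 := by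
    simp
  have := key θP hcon.le
  rw [hz] at h0
  linarith
end

section
/- If C and D are VC classes of subsets of a set X, then the classes C ⊓ D = {C ∩ D : C ∈ C, D ∈ D} and C ⊔ D = {C ∪ D : C ∈ C, D ∈ D} are also VC classes. -/
/-- A collection `C` of subsets shatters a finite set `S` if every subset of `S`
is traced out by some member of `C`. -/
def Shatters {X : Type*} (C : Set (Set X)) (S : Finset X) : Prop :=
  ∀ T : Set X, T ⊆ (S : Set X) → ∃ c ∈ C, (S : Set X) ∩ c = T

/-- A collection of subsets is a VC class if for some `n` no `n`-point set is
shattered by it. -/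
def IsVCClass {X : Type*} (C : Set (Set X)) : Prop :=
  ∃ n : ℕ, ∀ S : Finset X, S.card = n → ¬ Shatters C S

open Finset

/-- The trace of a set family on a finite set, as a finset of finsets. -/
noncomputable def traceFam {X : Type*} (C : Set (Set X)) (S : Finset X) : Finset (Finset X) :=
  @Finset.filter _ (fun t => ∃ c ∈ C, (S : Set X) ∩ c = (t : Set X))
    (Classical.decPred _) S.powerset

lemma mem_traceFam {X : Type*} {C : Set (Set X)} {S t : Finset X} :
    t ∈ traceFam C S ↔ t ⊆ S ∧ ∃ c ∈ C, (S : Set X) ∩ c = (t : Set X) := by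
  simp [traceFam, Finset.mem_filter, Finset.mem_powerset]

lemma shatters_subset {X : Type*} {C : Set (Set X)} {S T : Finset X}
    (hTS : T ⊆ S) (h : _root_.Shatters C S) : _root_.Shatters C T := by
  intro U hU
  have hTsub : (T : Set X) ⊆ (S : Set X) := coe_subset.2 hTS
  obtain ⟨c, hc, hSc⟩ := h U (hU.trans hTsub)
  refine ⟨c, hc, ?_⟩
  rw [show (T : Set X) ∩ c = (T : Set X) ∩ ((S : Set X) ∩ c) from by
    rw [← Set.inter_assoc, Set.inter_eq_left.2 hTsub], hSc, Set.inter_eq_right.2 hU]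

lemma shatters_of_traceFam_shatters {X : Type*} [DecidableEq X] {C : Set (Set X)} {S t : Finset X}
    (ht : (traceFam C S).Shatters t) : t ⊆ S ∧ _root_.Shatters C t := by
  classical
  obtain ⟨u, hu, htu⟩ := ht.exists_superset
  have htS : t ⊆ S := htu.trans (mem_traceFam.1 hu).1
  have htSc : (t : Set X) ⊆ (S : Set X) := coe_subset.2 htS
  refine ⟨htS, fun T hT => ?_⟩
  have hcu' : ((t.filter (· ∈ T) : Finset X) : Set X) = T := by
    rw [Finset.coe_filter]
    ext x
    simp only [Set.mem_setOf_eq, Finset.mem_coe]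
    exact ⟨fun h => h.2, fun h => ⟨by exact_mod_cast hT h, h⟩⟩
  obtain ⟨v, hv, htv⟩ := ht (Finset.filter_subset (· ∈ T) t)
  obtain ⟨hvS, c, hc, hSc⟩ := mem_traceFam.1 hv
  refine ⟨c, hc, ?_⟩
  rw [show (t : Set X) ∩ c = (t : Set X) ∩ ((S : Set X) ∩ c) from by
    rw [← Set.inter_assoc, Set.inter_eq_left.2 htSc], hSc, ← coe_inter, htv, hcu']

/-- Sauer-type bound for the trace of a class of VC index `n`. -/
lemma card_traceFam_le {X : Type*} {C : Set (Set X)} {n : ℕ}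
    (hC : ∀ S : Finset X, S.card = n → ¬ _root_.Shatters C S)
    (S : Finset X) (hn : n ≤ S.card + 1) :
    (traceFam C S).card ≤ (S.card + 1) ^ n := by
  classical
  have hsh : (traceFam C S).shatterer ⊆ (range n).biUnion (fun k => S.powersetCard k) := by
    intro t ht
    have hts := mem_shatterer.1 ht
    obtain ⟨htS, hsh⟩ := shatters_of_traceFam_shatters hts
    have hcard : t.card < n := by
      by_contra h
      push_neg at h
      obtain ⟨t', ht't, ht'card⟩ := Finset.exists_subset_card_eq h
      exact hC t' ht'card (shatters_subset ht't hsh)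
    simp only [mem_biUnion, mem_range, mem_powersetCard]
    exact ⟨t.card, hcard, ⟨htS, rfl⟩⟩
  calc (traceFam C S).card ≤ (traceFam C S).shatterer.card := card_le_card_shatterer _
    _ ≤ ((range n).biUnion (fun k => S.powersetCard k)).card := card_le_card hsh
    _ ≤ ∑ k ∈ range n, (S.powersetCard k).card := card_biUnion_le
    _ = ∑ k ∈ range n, S.card.choose k := by simp [card_powersetCard]
    _ ≤ ∑ _k ∈ range n, (S.card + 1) ^ (n - 1) := by
        refine Finset.sum_le_sum fun k hk => ?_
        calc S.card.choose k ≤ S.card ^ k := Nat.choose_le_pow _ _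
          _ ≤ (S.card + 1) ^ k := Nat.pow_le_pow_left (Nat.le_succ _) _
          _ ≤ (S.card + 1) ^ (n - 1) :=
            Nat.pow_le_pow_right (Nat.succ_le_succ (Nat.zero_le _))
              (by have := mem_range.1 hk; omega)
    _ = n * (S.card + 1) ^ (n - 1) := by rw [Finset.sum_const, card_range, smul_eq_mul]
    _ ≤ (S.card + 1) ^ n := by
        rcases Nat.eq_zero_or_pos n with h | h
        · simp [h]
        · calc n * (S.card + 1) ^ (n - 1) ≤ (S.card + 1) * (S.card + 1) ^ (n - 1) :=
              Nat.mul_le_mul_right _ hn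
            _ = (S.card + 1) ^ n := by
              rw [← pow_succ']; congr 1; omega

lemma exists_pow_lt_two_pow (k : ℕ) : ∃ N, k ≤ N ∧ (N + 1) ^ k < 2 ^ N := by
  set k' := k + 1 with hk'
  set m := 2 * k' + 4 with hm
  refine ⟨k' * m, by nlinarith, ?_⟩
  have h1 : (k' * m + 1) ^ k ≤ (k' * m + 1) ^ k' :=
    Nat.pow_le_pow_right (Nat.succ_le_succ (Nat.zero_le _)) (Nat.le_succ _)
  have h2 : (2 : ℕ) ^ (k' * m) = (2 ^ m) ^ k' := by
    rw [← pow_mul, Nat.mul_comm]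
  have hx : k' < 2 ^ k' := Nat.lt_two_pow_self
  have h3 : k' * m + 1 < 2 ^ m := by
    have h4 : (2 : ℕ) ^ m = 16 * (2 ^ k') ^ 2 := by
      rw [hm, pow_add, Nat.mul_comm 2 k', pow_mul]; ring
    rw [h4]
    nlinarith [hx, Nat.one_le_two_pow (n := k')]
  calc (k' * m + 1) ^ k ≤ (k' * m + 1) ^ k' := h1
    _ < (2 ^ m) ^ k' := Nat.pow_lt_pow_left h3 (by omega)
    _ = 2 ^ (k' * m) := h2.symm

lemma vc_binop {X : Type*} (C D : Set (Set X)) {n m : ℕ}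
    (hC : ∀ S : Finset X, S.card = n → ¬ _root_.Shatters C S)
    (hD : ∀ S : Finset X, S.card = m → ¬ _root_.Shatters D S)
    (op : Set X → Set X → Set X) (fop : Finset X → Finset X → Finset X)
    (hcoe : ∀ (a b : Finset X), ((fop a b : Finset X) : Set X) = op (a : Set X) (b : Set X))
    (hdistrib : ∀ (s a b : Set X), op (s ∩ a) (s ∩ b) = s ∩ op a b) :
    IsVCClass {s : Set X | ∃ c ∈ C, ∃ d ∈ D, s = op c d} := by
  classical
  obtain ⟨N, hkN, hlt⟩ := exists_pow_lt_two_pow (n + m)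
  refine ⟨N, fun S hScard hSh => ?_⟩
  set E : Set (Set X) := {s : Set X | ∃ c ∈ C, ∃ d ∈ D, s = op c d} with hE
  -- the trace of E on S is the full powerset
  have hfull : S.powerset ⊆ traceFam E S := by
    intro t ht
    obtain ⟨e, he, hSe⟩ := hSh (t : Set X) (coe_subset.2 (mem_powerset.1 ht))
    exact mem_traceFam.2 ⟨mem_powerset.1 ht, e, he, hSe⟩
  -- the trace of E embeds into pairs of traces
  have hsub : traceFam E S ⊆
      ((traceFam C S) ×ˢ (traceFam D S)).image (fun p => fop p.1 p.2) := by
    intro t ht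
    obtain ⟨htS, e, he, hSe⟩ := mem_traceFam.1 ht
    obtain ⟨c, hc, d, hd, rfl⟩ := he
    set a : Finset X := S.filter (fun x => x ∈ c) with ha
    set b : Finset X := S.filter (fun x => x ∈ d) with hb
    have hca : (a : Set X) = (S : Set X) ∩ c := by
      ext x; simp [ha, Set.mem_inter_iff]
    have hcb : (b : Set X) = (S : Set X) ∩ d := by
      ext x; simp [hb, Set.mem_inter_iff]
    have haT : a ∈ traceFam C S := mem_traceFam.2 ⟨filter_subset _ _, c, hc, hca.symm⟩
    have hbT : b ∈ traceFam D S := mem_traceFam.2 ⟨filter_subset _ _, d, hd, hcb.symm⟩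
    refine mem_image.2 ⟨⟨a, b⟩, mem_product.2 ⟨haT, hbT⟩, ?_⟩
    apply Finset.coe_injective
    rw [hcoe, hca, hcb, hdistrib, hSe]
  have hcount : 2 ^ N ≤ (N + 1) ^ (n + m) := by
    calc 2 ^ N = S.powerset.card := by rw [card_powerset, hScard]
      _ ≤ (traceFam E S).card := card_le_card hfull
      _ ≤ (((traceFam C S) ×ˢ (traceFam D S)).image (fun p => fop p.1 p.2)).card :=
          card_le_card hsub
      _ ≤ ((traceFam C S) ×ˢ (traceFam D S)).card := card_image_le
      _ = (traceFam C S).card * (traceFam D S).card := card_product _ _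
      _ ≤ (N + 1) ^ n * (N + 1) ^ m := by
          have h1 := card_traceFam_le hC S (by omega)
          have h2 := card_traceFam_le hD S (by omega)
          rw [hScard] at h1 h2
          exact Nat.mul_le_mul h1 h2
      _ = (N + 1) ^ (n + m) := by rw [← pow_add]
  omega

/-- If `C` and `D` are VC classes then so are the classes of pairwise
intersections `{C ∩ D}` and pairwise unions `{C ∪ D}`. -/
theorem vc_inter_union {X : Type*} (C D : Set (Set X))
    (hC : IsVCClass C) (hD : IsVCClass D) :
    IsVCClass {s : Set X | ∃ c ∈ C, ∃ d ∈ D, s = c ∩ d} ∧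
    IsVCClass {s : Set X | ∃ c ∈ C, ∃ d ∈ D, s = c ∪ d} := by
  classical
  obtain ⟨n, hn⟩ := hC
  obtain ⟨m, hm⟩ := hD
  constructor
  · exact vc_binop C D hn hm (· ∩ ·) (· ∩ ·)
      (fun a b => by push_cast; rfl)
      (fun s a b => by rw [← Set.inter_inter_distrib_left])
  · exact vc_binop C D hn hm (· ∪ ·) (· ∪ ·)
      (fun a b => by push_cast; rfl)
      (fun s a b => by rw [Set.inter_union_distrib_left])
end
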